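/- Let A₁,…,A_n be p×p positive semi-definite matrices with average Ā = n⁻¹Σᵢ Aᵢ. Then the absolute value of Σ over distinct quadruples (i,j,k,ℓ) of tr(AᵢAⱼA_kA_ℓ) is at most n⁴ tr(Ā⁴) + 10 n² tr(Ā²) Σᵢ tr(Aᵢ²) + 13 (Σᵢ tr(Aᵢ²))². -/

import Mathlib

open Matrix Finset

section AuxTrace

variable {n p : ℕ}

private lemma trace_cyc4 (W X Y Z : Matrix (Fin p) (Fin p) ℝ) :
    (W * X * Y * Z).trace = (Z * W * X * Y).trace := by
  rw [Matrix.trace_mul_cycle (W * X) Y Z]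
  rw [show Z * (W * X) * Y = Z * W * X * Y by simp only [Matrix.mul_assoc]]

private lemma trace_ctmul_eq (X Y : Matrix (Fin p) (Fin p) ℝ) :
    (Xᴴ * Y).trace = ∑ a, ∑ b, X b a * Y b a := by
  simp [Matrix.trace, Matrix.mul_apply, Matrix.diag, Matrix.conjTranspose_apply]

private lemma trace_ctmul_le (X Y : Matrix (Fin p) (Fin p) ℝ) :
    (Xᴴ * Y).trace ≤ ((Xᴴ * X).trace + (Yᴴ * Y).trace) / 2 := by
  rw [trace_ctmul_eq, trace_ctmul_eq, trace_ctmul_eq, le_div_iff₀ (by norm_num : (0:ℝ) < 2),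
    ← Finset.sum_add_distrib, Finset.sum_mul]
  refine Finset.sum_le_sum fun a _ => ?_
  rw [Finset.sum_mul, ← Finset.sum_add_distrib]
  refine Finset.sum_le_sum fun b _ => ?_
  nlinarith [sq_nonneg (X b a - Y b a)]

private lemma trace_mul_self_le (M : Matrix (Fin p) (Fin p) ℝ) :
    (M * M).trace ≤ (M * Mᴴ).trace := by
  have h := trace_ctmul_le (Mᴴ) M
  rw [Matrix.conjTranspose_conjTranspose] at h
  have h2 : (Mᴴ * M).trace = (M * Mᴴ).trace := Matrix.trace_mul_comm _ _
  linarith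

private lemma trace_ct_self_nonneg (M : Matrix (Fin p) (Fin p) ℝ) : 0 ≤ (Mᴴ * M).trace := by
  rw [trace_ctmul_eq]
  exact Finset.sum_nonneg fun a _ => Finset.sum_nonneg fun b _ => mul_self_nonneg _

private lemma psd_trace_eq (P Q : Matrix (Fin p) (Fin p) ℝ) :
    (Pᴴ * P * (Qᴴ * Q)).trace = ((P * Qᴴ)ᴴ * (P * Qᴴ)).trace := by
  rw [Matrix.conjTranspose_mul, Matrix.conjTranspose_conjTranspose]
  calc (Pᴴ * P * (Qᴴ * Q)).trace
      = (Pᴴ * P * Qᴴ * Q).trace := by rw [show Pᴴ * P * (Qᴴ * Q) = Pᴴ * P * Qᴴ * Q by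
          simp only [Matrix.mul_assoc]]
    _ = (Q * Pᴴ * P * Qᴴ).trace := trace_cyc4 Pᴴ P Qᴴ Q
    _ = (Q * Pᴴ * (P * Qᴴ)).trace := by rw [show Q * Pᴴ * P * Qᴴ = Q * Pᴴ * (P * Qᴴ) by
          simp only [Matrix.mul_assoc]]

private lemma trace_psd_mul_nonneg {B C : Matrix (Fin p) (Fin p) ℝ} (hB : B.PosSemidef)
    (hC : C.PosSemidef) : 0 ≤ (B * C).trace := by
  obtain ⟨P, rfl⟩ := (by open scoped MatrixOrder in exact CStarAlgebra.nonneg_iff_eq_star_mul_self.mp hB.nonneg :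
    ∃ P : Matrix (Fin p) (Fin p) ℝ, B = Pᴴ * P)
  obtain ⟨Q, rfl⟩ := (by open scoped MatrixOrder in exact CStarAlgebra.nonneg_iff_eq_star_mul_self.mp hC.nonneg :
    ∃ P : Matrix (Fin p) (Fin p) ℝ, C = Pᴴ * P)
  rw [psd_trace_eq P Q]
  exact trace_ct_self_nonneg _

private lemma trace_psd_mul_le {B C : Matrix (Fin p) (Fin p) ℝ} (hB : B.PosSemidef)
    (hC : C.PosSemidef) : (B * C).trace ≤ B.trace * C.trace := by
  obtain ⟨P, rfl⟩ := (by open scoped MatrixOrder in exact CStarAlgebra.nonneg_iff_eq_star_mul_self.mp hB.nonneg :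
    ∃ P : Matrix (Fin p) (Fin p) ℝ, B = Pᴴ * P)
  obtain ⟨Q, rfl⟩ := (by open scoped MatrixOrder in exact CStarAlgebra.nonneg_iff_eq_star_mul_self.mp hC.nonneg :
    ∃ P : Matrix (Fin p) (Fin p) ℝ, C = Pᴴ * P)
  rw [psd_trace_eq P Q, trace_ctmul_eq, trace_ctmul_eq, trace_ctmul_eq]
  have hent : ∀ a b : Fin p, (P * Qᴴ) b a * (P * Qᴴ) b a ≤
      (∑ c, P b c * P b c) * (∑ c, Q a c * Q a c) := by
    intro a b
    have h := Finset.sum_mul_sq_le_sq_mul_sq Finset.univ (fun c => P b c) (fun c => Q a c)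
    simp only [Matrix.mul_apply, Matrix.conjTranspose_apply, star_trivial]
    calc (∑ c, P b c * Q a c) * (∑ c, P b c * Q a c)
        = (∑ c, P b c * Q a c) ^ 2 := by ring
      _ ≤ (∑ c, (P b c) ^ 2) * (∑ c, (Q a c) ^ 2) := h
      _ = (∑ c, P b c * P b c) * (∑ c, Q a c * Q a c) := by
          congr 1 <;> exact Finset.sum_congr rfl fun c _ => by ring
  calc ∑ a, ∑ b, (P * Qᴴ) b a * (P * Qᴴ) b a
      ≤ ∑ a, ∑ b, (∑ c, P b c * P b c) * (∑ c, Q a c * Q a c) :=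
        Finset.sum_le_sum fun a _ => Finset.sum_le_sum fun b _ => hent a b
    _ = (∑ b, ∑ c, P b c * P b c) * (∑ a, ∑ c, Q a c * Q a c) := by
        simp only [← Finset.sum_mul, ← Finset.mul_sum]
    _ = (∑ a, ∑ b, P b a * P b a) * (∑ a, ∑ b, Q b a * Q b a) := by
        rw [Finset.sum_comm, Finset.sum_comm (f := fun a c => Q a c * Q a c)]

private lemma ite_distinct_identity {α : Type*} [DecidableEq α] (i j k l : α) (t : ℝ) :
    (if i ≠ j ∧ i ≠ k ∧ i ≠ l ∧ j ≠ k ∧ j ≠ l ∧ k ≠ l then t else 0)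
    = t - ((if i = j then t else 0) + (if i = k then t else 0) + (if i = l then t else 0)
         + (if j = k then t else 0) + (if j = l then t else 0) + (if k = l then t else 0))
      + ((if i = j then (if k = l then t else 0) else 0)
         + (if i = k then (if j = l then t else 0) else 0)
         + (if i = l then (if j = k then t else 0) else 0))
      + 2 * ((if i = j then (if j = k then t else 0) else 0)
         + (if i = j then (if j = l then t else 0) else 0)
         + (if i = k then (if k = l then t else 0) else 0)
         + (if j = k then (if k = l then t else 0) else 0))
      - 6 * (if i = j then (if j = k then (if k = l then t else 0) else 0) else 0) := by
  by_cases h1 : i = j <;> by_cases h2 : i = k <;> by_cases h3 : i = l <;>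
    by_cases h4 : j = k <;> by_cases h5 : j = l <;> by_cases h6 : k = l <;>
    simp_all <;> ring

private lemma sum_comm3 {α β γ M : Type*} [Fintype α] [Fintype β] [Fintype γ]
    [AddCommMonoid M] (f : α → β → γ → M) :
    ∑ a, ∑ b, ∑ c, f a b c = ∑ c, ∑ b, ∑ a, f a b c := by
  rw [show (∑ a, ∑ b, ∑ c, f a b c) = ∑ a, ∑ c, ∑ b, f a b c from
    Finset.sum_congr rfl fun a _ => Finset.sum_comm, Finset.sum_comm]
  exact Finset.sum_congr rfl fun c _ => Finset.sum_comm

private lemma sum_comm4 {α β γ δ M : Type*} [Fintype α] [Fintype β] [Fintype γ] [Fintype δ]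
    [AddCommMonoid M] (f : α → β → γ → δ → M) :
    ∑ a, ∑ b, ∑ c, ∑ d, f a b c d = ∑ d, ∑ c, ∑ b, ∑ a, f a b c d := by
  rw [show (∑ a, ∑ b, ∑ c, ∑ d, f a b c d) = ∑ a, ∑ d, ∑ c, ∑ b, f a b c d from
    Finset.sum_congr rfl fun a _ => sum_comm3 _, Finset.sum_comm]
  refine Finset.sum_congr rfl fun d _ => ?_
  rw [Finset.sum_comm]
  exact Finset.sum_congr rfl fun c _ => Finset.sum_comm

variable (A : Fin n → Matrix (Fin p) (Fin p) ℝ)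

private lemma expand4 :
    ∑ i, ∑ j, ∑ k, ∑ l, (A i * A j * A k * A l).trace
      = ((∑ i, A i) * (∑ i, A i) * (∑ i, A i) * (∑ i, A i)).trace := by
  simp only [Finset.sum_mul, Finset.mul_sum, Matrix.trace_sum]
  exact (sum_comm4 fun a b c d => (A d * A c * A b * A a).trace).symm

private lemma expandE1 :
    ∑ i, ∑ k, ∑ l, (A i * A i * A k * A l).trace
      = ((∑ i, A i * A i) * (∑ i, A i) * (∑ i, A i)).trace := by
  simp only [Finset.sum_mul, Finset.mul_sum, Matrix.trace_sum]
  exact (sum_comm3 fun a b c => (A c * A c * A b * A a).trace).symm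

private lemma expandE2 :
    ∑ i, ∑ j, ∑ k, (A i * A j * A k * A k).trace
      = ((∑ i, A i) * (∑ i, A i) * (∑ i, A i * A i)).trace := by
  simp only [Finset.sum_mul, Finset.mul_sum, Matrix.trace_sum, Matrix.mul_assoc]
  exact (sum_comm3 fun a b c => (A c * (A b * (A a * A a))).trace).symm

private lemma expandE3 :
    ∑ i, ∑ j, ∑ l, (A i * A j * A i * A l).trace
      = ∑ i, (A i * (∑ m, A m) * A i * (∑ m, A m)).trace := by
  simp only [Finset.sum_mul, Finset.mul_sum, Matrix.trace_sum]
  exact Finset.sum_congr rfl fun i _ => Finset.sum_comm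

private lemma expandE4 :
    ∑ i, ∑ k, (A i * A i * A k * A k).trace
      = ((∑ i, A i * A i) * (∑ i, A i * A i)).trace := by
  simp only [Finset.sum_mul, Finset.mul_sum, Matrix.trace_sum, Matrix.mul_assoc]
  exact Finset.sum_comm

private lemma expandE5 :
    ∑ i, ∑ l, (A i * A i * A i * A l).trace
      = ∑ i, (A i * A i * A i * (∑ m, A m)).trace := by
  simp only [Finset.mul_sum, Matrix.trace_sum]

private lemma psd_sum (h : ∀ i, (A i).PosSemidef) : (∑ i, A i).PosSemidef :=
  Finset.sum_induction _ _ (fun _ _ ha hb => ha.add hb) Matrix.PosSemidef.zero fun i _ => h i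

end AuxTrace

set_option maxHeartbeats 1000000 in
theorem abs_sum_trace_distinct_quadruples_le
    {n p : ℕ} (hn : 0 < n) (A : Fin n → Matrix (Fin p) (Fin p) ℝ)
    (hA : ∀ i, (A i).PosSemidef) :
    |∑ i : Fin n, ∑ j : Fin n, ∑ k : Fin n, ∑ l : Fin n,
        (if i ≠ j ∧ i ≠ k ∧ i ≠ l ∧ j ≠ k ∧ j ≠ l ∧ k ≠ l then
          (A i * A j * A k * A l).trace else 0)| ≤
      (n : ℝ) ^ 4 * ((((n : ℝ)⁻¹ • ∑ i : Fin n, A i) ^ 4).trace)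
        + 10 * (n : ℝ) ^ 2 * ((((n : ℝ)⁻¹ • ∑ i : Fin n, A i) ^ 2).trace)
            * ∑ i : Fin n, ((A i ^ 2).trace)
        + 13 * (∑ i : Fin n, ((A i ^ 2).trace)) ^ 2 := by
  classical
  have hn0 : (n : ℝ) ≠ 0 := Nat.cast_ne_zero.mpr hn.ne'
  -- basic psd facts
  have hAH : ∀ i, (A i)ᴴ = A i := fun i => (hA i).1
  have hSpsd : (∑ i : Fin n, A i).PosSemidef := psd_sum A hA
  have hSH : (∑ i : Fin n, A i)ᴴ = ∑ i : Fin n, A i := hSpsd.1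
  have hAApsd : ∀ i, (A i * A i).PosSemidef := fun i => by
    rw [show A i * A i = (A i)ᴴ * A i by rw [hAH i]]
    exact Matrix.posSemidef_conjTranspose_mul_self _
  have hBpsd : (∑ i : Fin n, A i * A i).PosSemidef := psd_sum _ hAApsd
  have hSSpsd : ((∑ i : Fin n, A i) * (∑ i : Fin n, A i)).PosSemidef := by
    rw [show (∑ i : Fin n, A i) * (∑ i : Fin n, A i)
        = (∑ i : Fin n, A i)ᴴ * (∑ i : Fin n, A i) by rw [hSH]]
    exact Matrix.posSemidef_conjTranspose_mul_self _
  have hBtr : (∑ i : Fin n, A i * A i).trace = ∑ i : Fin n, (A i * A i).trace :=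
    Matrix.trace_sum _ _
  -- bounds for canonical pieces
  have hBSSle : ((∑ i : Fin n, A i * A i) * (∑ i : Fin n, A i) * (∑ i : Fin n, A i)).trace
      ≤ (∑ i : Fin n, (A i * A i).trace)
        * ((∑ i : Fin n, A i) * (∑ i : Fin n, A i)).trace := by
    rw [Matrix.mul_assoc, ← hBtr]
    exact trace_psd_mul_le hBpsd hSSpsd
  have hBSSnn : 0 ≤ ((∑ i : Fin n, A i * A i) * (∑ i : Fin n, A i)
      * (∑ i : Fin n, A i)).trace := by
    rw [Matrix.mul_assoc]
    exact trace_psd_mul_nonneg hBpsd hSSpsd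
  have hSSBeq : ((∑ i : Fin n, A i) * (∑ i : Fin n, A i) * (∑ i : Fin n, A i * A i)).trace
      = ((∑ i : Fin n, A i * A i) * (∑ i : Fin n, A i) * (∑ i : Fin n, A i)).trace := by
    rw [Matrix.trace_mul_comm, Matrix.mul_assoc]
  have hBBle : ((∑ i : Fin n, A i * A i) * (∑ i : Fin n, A i * A i)).trace
      ≤ (∑ i : Fin n, (A i * A i).trace) * (∑ i : Fin n, (A i * A i).trace) := by
    rw [← hBtr]; exact trace_psd_mul_le hBpsd hBpsd
  have hBBnn : 0 ≤ ((∑ i : Fin n, A i * A i) * (∑ i : Fin n, A i * A i)).trace :=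
    trace_psd_mul_nonneg hBpsd hBpsd
  have hT0nn : 0 ≤ ((∑ i : Fin n, A i) * (∑ i : Fin n, A i) * (∑ i : Fin n, A i)
      * (∑ i : Fin n, A i)).trace := by
    rw [Matrix.mul_assoc]
    exact trace_psd_mul_nonneg hSSpsd hSSpsd
  -- cross bound : ∑ i tr(A i S A i S)
  have hcross_per : ∀ i, (A i * (∑ m : Fin n, A m) * A i * (∑ m : Fin n, A m)).trace
      ≤ (A i * A i * ((∑ m : Fin n, A m) * (∑ m : Fin n, A m))).trace := by
    intro i
    have h2 := trace_mul_self_le (A i * (∑ m : Fin n, A m))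
    rw [Matrix.conjTranspose_mul, hSH, hAH i] at h2
    calc (A i * (∑ m : Fin n, A m) * A i * (∑ m : Fin n, A m)).trace
        = (A i * (∑ m : Fin n, A m) * (A i * (∑ m : Fin n, A m))).trace := by
          rw [show A i * (∑ m : Fin n, A m) * A i * (∑ m : Fin n, A m)
            = A i * (∑ m : Fin n, A m) * (A i * (∑ m : Fin n, A m)) by
            simp only [Matrix.mul_assoc]]
      _ ≤ (A i * (∑ m : Fin n, A m) * ((∑ m : Fin n, A m) * A i)).trace := h2
      _ = (A i * (∑ m : Fin n, A m) * (∑ m : Fin n, A m) * A i).trace := by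
          rw [show A i * (∑ m : Fin n, A m) * ((∑ m : Fin n, A m) * A i)
            = A i * (∑ m : Fin n, A m) * (∑ m : Fin n, A m) * A i by
            simp only [Matrix.mul_assoc]]
      _ = (A i * A i * (∑ m : Fin n, A m) * (∑ m : Fin n, A m)).trace :=
          trace_cyc4 _ _ _ _
      _ = (A i * A i * ((∑ m : Fin n, A m) * (∑ m : Fin n, A m))).trace := by
          rw [Matrix.mul_assoc]
  have hcross_le : ∑ i : Fin n, (A i * (∑ m : Fin n, A m) * A i * (∑ m : Fin n, A m)).trace
      ≤ (∑ i : Fin n, (A i * A i).trace)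
        * ((∑ i : Fin n, A i) * (∑ i : Fin n, A i)).trace := by
    calc ∑ i : Fin n, (A i * (∑ m : Fin n, A m) * A i * (∑ m : Fin n, A m)).trace
        ≤ ∑ i : Fin n, (A i * A i * ((∑ m : Fin n, A m) * (∑ m : Fin n, A m))).trace :=
          Finset.sum_le_sum fun i _ => hcross_per i
      _ = ((∑ i : Fin n, A i * A i) * ((∑ m : Fin n, A m) * (∑ m : Fin n, A m))).trace := by
          rw [← Matrix.trace_sum, ← Finset.sum_mul]
      _ ≤ _ := by rw [← hBtr]; exact trace_psd_mul_le hBpsd hSSpsd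
  have hcross_nn : 0 ≤ ∑ i : Fin n,
      (A i * (∑ m : Fin n, A m) * A i * (∑ m : Fin n, A m)).trace := by
    refine Finset.sum_nonneg fun i _ => ?_
    have hpsd : (A i * (∑ m : Fin n, A m) * A i).PosSemidef := by
      have := Matrix.PosSemidef.conjTranspose_mul_mul_same hSpsd (A i)
      rwa [hAH i] at this
    exact trace_psd_mul_nonneg hpsd hSpsd
  -- D2 bound : ∑ i ∑ j tr(Ai Aj Ai Aj)
  have hD2_per : ∀ i j, (A i * A j * A i * A j).trace
      ≤ (A i * A i * A j * A j).trace := by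
    intro i j
    have h2 := trace_mul_self_le (A i * A j)
    rw [Matrix.conjTranspose_mul, hAH i, hAH j] at h2
    calc (A i * A j * A i * A j).trace
        = (A i * A j * (A i * A j)).trace := by
          rw [show A i * A j * A i * A j = A i * A j * (A i * A j) by
            simp only [Matrix.mul_assoc]]
      _ ≤ (A i * A j * (A j * A i)).trace := h2
      _ = (A i * A j * A j * A i).trace := by
          rw [show A i * A j * (A j * A i) = A i * A j * A j * A i by
            simp only [Matrix.mul_assoc]]
      _ = (A i * A i * A j * A j).trace := trace_cyc4 _ _ _ _
  have hD2_le : ∑ i : Fin n, ∑ j : Fin n, (A i * A j * A i * A j).trace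
      ≤ (∑ i : Fin n, (A i * A i).trace) * (∑ i : Fin n, (A i * A i).trace) := by
    calc ∑ i : Fin n, ∑ j : Fin n, (A i * A j * A i * A j).trace
        ≤ ∑ i : Fin n, ∑ j : Fin n, (A i * A i * A j * A j).trace :=
          Finset.sum_le_sum fun i _ => Finset.sum_le_sum fun j _ => hD2_per i j
      _ = ((∑ i : Fin n, A i * A i) * (∑ i : Fin n, A i * A i)).trace := expandE4 A
      _ ≤ _ := hBBle
  have hD2_nn : 0 ≤ ∑ i : Fin n, ∑ j : Fin n, (A i * A j * A i * A j).trace := by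
    refine Finset.sum_nonneg fun i _ => Finset.sum_nonneg fun j _ => ?_
    have hpsd : (A i * A j * A i).PosSemidef := by
      have := Matrix.PosSemidef.conjTranspose_mul_mul_same (hA j) (A i)
      rwa [hAH i] at this
    exact trace_psd_mul_nonneg hpsd (hA j)
  -- U bound : ∑ i tr(Ai^4)
  have hU_le : ∑ i : Fin n, (A i * A i * A i * A i).trace
      ≤ (∑ i : Fin n, (A i * A i).trace) * (∑ i : Fin n, (A i * A i).trace) := by
    have hstep : ∑ i : Fin n, (A i * A i * A i * A i).trace
        ≤ ∑ i : Fin n, ∑ j : Fin n, (A i * A i * A j * A j).trace := by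
      refine Finset.sum_le_sum fun i _ => ?_
      have hnn : ∀ j ∈ Finset.univ, 0 ≤ (A i * A i * A j * A j).trace := by
        intro j _
        rw [show A i * A i * A j * A j = (A i * A i) * (A j * A j) by
          simp only [Matrix.mul_assoc]]
        exact trace_psd_mul_nonneg (hAApsd i) (hAApsd j)
      exact Finset.single_le_sum hnn (Finset.mem_univ i)
    calc ∑ i : Fin n, (A i * A i * A i * A i).trace
        ≤ ∑ i : Fin n, ∑ j : Fin n, (A i * A i * A j * A j).trace := hstep
      _ = ((∑ i : Fin n, A i * A i) * (∑ i : Fin n, A i * A i)).trace := expandE4 A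
      _ ≤ _ := hBBle
  have hU_nn : 0 ≤ ∑ i : Fin n, (A i * A i * A i * A i).trace := by
    refine Finset.sum_nonneg fun i _ => ?_
    have hpsd : (A i * A i * A i).PosSemidef := by
      have := Matrix.PosSemidef.conjTranspose_mul_mul_same (hA i) (A i)
      rwa [hAH i] at this
    exact trace_psd_mul_nonneg hpsd (hA i)
  -- R bound : ∑ i tr(Ai^3 S)
  have hR_per : ∀ i, (A i * A i * A i * (∑ m : Fin n, A m)).trace
      ≤ ((A i * A i * A i * A i).trace
        + (A i * A i * ((∑ m : Fin n, A m) * (∑ m : Fin n, A m))).trace) / 2 := by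
    intro i
    have h2 := trace_ctmul_le (A i * A i) (A i * (∑ m : Fin n, A m))
    rw [Matrix.conjTranspose_mul, Matrix.conjTranspose_mul, hAH i, hSH] at h2
    calc (A i * A i * A i * (∑ m : Fin n, A m)).trace
        = (A i * A i * (A i * (∑ m : Fin n, A m))).trace := by
          rw [show A i * A i * A i * (∑ m : Fin n, A m)
            = A i * A i * (A i * (∑ m : Fin n, A m)) by simp only [Matrix.mul_assoc]]
      _ ≤ ((A i * A i * (A i * A i)).trace
          + ((∑ m : Fin n, A m) * A i * (A i * (∑ m : Fin n, A m))).trace) / 2 := h2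
      _ = ((A i * A i * A i * A i).trace
          + (A i * A i * ((∑ m : Fin n, A m) * (∑ m : Fin n, A m))).trace) / 2 := by
          congr 2
          · rw [show A i * A i * (A i * A i) = A i * A i * A i * A i by
              simp only [Matrix.mul_assoc]]
          · calc ((∑ m : Fin n, A m) * A i * (A i * (∑ m : Fin n, A m))).trace
                = ((∑ m : Fin n, A m) * A i * A i * (∑ m : Fin n, A m)).trace := by
                  rw [show (∑ m : Fin n, A m) * A i * (A i * (∑ m : Fin n, A m))
                    = (∑ m : Fin n, A m) * A i * A i * (∑ m : Fin n, A m) by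
                    simp only [Matrix.mul_assoc]]
              _ = ((∑ m : Fin n, A m) * (∑ m : Fin n, A m) * A i * A i).trace :=
                  trace_cyc4 _ _ _ _
              _ = (A i * A i * (∑ m : Fin n, A m) * (∑ m : Fin n, A m)).trace := by
                  rw [trace_cyc4, trace_cyc4]
              _ = (A i * A i * ((∑ m : Fin n, A m) * (∑ m : Fin n, A m))).trace := by
                  rw [Matrix.mul_assoc]
  have hR_le : ∑ i : Fin n, (A i * A i * A i * (∑ m : Fin n, A m)).trace
      ≤ ((∑ i : Fin n, (A i * A i).trace) * (∑ i : Fin n, (A i * A i).trace)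
        + (∑ i : Fin n, (A i * A i).trace)
          * ((∑ i : Fin n, A i) * (∑ i : Fin n, A i)).trace) / 2 := by
    have hsum : ∑ i : Fin n, (A i * A i * ((∑ m : Fin n, A m) * (∑ m : Fin n, A m))).trace
        = ((∑ i : Fin n, A i * A i)
          * ((∑ m : Fin n, A m) * (∑ m : Fin n, A m))).trace := by
      rw [← Matrix.trace_sum, ← Finset.sum_mul]
    have hsum_le : ((∑ i : Fin n, A i * A i)
          * ((∑ m : Fin n, A m) * (∑ m : Fin n, A m))).trace
        ≤ (∑ i : Fin n, (A i * A i).trace)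
          * ((∑ i : Fin n, A i) * (∑ i : Fin n, A i)).trace := by
      rw [← hBtr]; exact trace_psd_mul_le hBpsd hSSpsd
    calc ∑ i : Fin n, (A i * A i * A i * (∑ m : Fin n, A m)).trace
        ≤ ∑ i : Fin n, ((A i * A i * A i * A i).trace
          + (A i * A i * ((∑ m : Fin n, A m) * (∑ m : Fin n, A m))).trace) / 2 :=
          Finset.sum_le_sum fun i _ => hR_per i
      _ = ((∑ i : Fin n, (A i * A i * A i * A i).trace)
          + ∑ i : Fin n, (A i * A i * ((∑ m : Fin n, A m) * (∑ m : Fin n, A m))).trace) / 2 := by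
          rw [← Finset.sum_div, Finset.sum_add_distrib]
      _ ≤ _ := by
          have := hU_le
          rw [hsum]
          linarith [hsum_le]
  have hR_nn : 0 ≤ ∑ i : Fin n, (A i * A i * A i * (∑ m : Fin n, A m)).trace := by
    refine Finset.sum_nonneg fun i _ => ?_
    have hpsd : (A i * A i * A i).PosSemidef := by
      have := Matrix.PosSemidef.conjTranspose_mul_mul_same (hA i) (A i)
      rwa [hAH i] at this
    exact trace_psd_mul_nonneg hpsd hSpsd
  -- the inclusion-exclusion identity
  have key : (∑ i : Fin n, ∑ j : Fin n, ∑ k : Fin n, ∑ l : Fin n,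
        (if i ≠ j ∧ i ≠ k ∧ i ≠ l ∧ j ≠ k ∧ j ≠ l ∧ k ≠ l then
          (A i * A j * A k * A l).trace else 0))
      = (∑ i : Fin n, ∑ j : Fin n, ∑ k : Fin n, ∑ l : Fin n, (A i * A j * A k * A l).trace)
        - ((∑ i : Fin n, ∑ k : Fin n, ∑ l : Fin n, (A i * A i * A k * A l).trace)
          + (∑ i : Fin n, ∑ j : Fin n, ∑ l : Fin n, (A i * A j * A i * A l).trace)
          + (∑ i : Fin n, ∑ j : Fin n, ∑ k : Fin n, (A i * A j * A k * A i).trace)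
          + (∑ i : Fin n, ∑ j : Fin n, ∑ l : Fin n, (A i * A j * A j * A l).trace)
          + (∑ i : Fin n, ∑ j : Fin n, ∑ k : Fin n, (A i * A j * A k * A j).trace)
          + (∑ i : Fin n, ∑ j : Fin n, ∑ k : Fin n, (A i * A j * A k * A k).trace))
        + ((∑ i : Fin n, ∑ k : Fin n, (A i * A i * A k * A k).trace)
          + (∑ i : Fin n, ∑ j : Fin n, (A i * A j * A i * A j).trace)
          + (∑ i : Fin n, ∑ j : Fin n, (A i * A j * A j * A i).trace))
        + 2 * ((∑ i : Fin n, ∑ l : Fin n, (A i * A i * A i * A l).trace)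
          + (∑ i : Fin n, ∑ k : Fin n, (A i * A i * A k * A i).trace)
          + (∑ i : Fin n, ∑ j : Fin n, (A i * A j * A i * A i).trace)
          + (∑ i : Fin n, ∑ j : Fin n, (A i * A j * A j * A j).trace))
        - 6 * (∑ i : Fin n, (A i * A i * A i * A i).trace) := by
    simp only [ite_distinct_identity, Finset.sum_sub_distrib, Finset.sum_add_distrib,
      Finset.sum_ite_irrel, Finset.sum_ite_eq, Finset.sum_ite_eq', Finset.mem_univ, if_true,
      ← Finset.mul_sum, Finset.sum_const_zero]
  -- normalize the non-canonical patterns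
  have eT0 : ∑ i : Fin n, ∑ j : Fin n, ∑ k : Fin n, ∑ l : Fin n,
      (A i * A j * A k * A l).trace
      = ((∑ i : Fin n, A i) * (∑ i : Fin n, A i) * (∑ i : Fin n, A i)
        * (∑ i : Fin n, A i)).trace := expand4 A
  have eP1 : ∑ i : Fin n, ∑ k : Fin n, ∑ l : Fin n, (A i * A i * A k * A l).trace
      = ((∑ i : Fin n, A i * A i) * (∑ i : Fin n, A i) * (∑ i : Fin n, A i)).trace :=
    expandE1 A
  have eP2 : ∑ i : Fin n, ∑ j : Fin n, ∑ l : Fin n, (A i * A j * A i * A l).trace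
      = ∑ i : Fin n, (A i * (∑ m : Fin n, A m) * A i * (∑ m : Fin n, A m)).trace :=
    expandE3 A
  have eP3 : ∑ i : Fin n, ∑ j : Fin n, ∑ k : Fin n, (A i * A j * A k * A i).trace
      = ((∑ i : Fin n, A i * A i) * (∑ i : Fin n, A i) * (∑ i : Fin n, A i)).trace := by
    calc ∑ i : Fin n, ∑ j : Fin n, ∑ k : Fin n, (A i * A j * A k * A i).trace
        = ∑ i : Fin n, ∑ j : Fin n, ∑ k : Fin n, (A i * A i * A j * A k).trace :=
          Finset.sum_congr rfl fun i _ => Finset.sum_congr rfl fun j _ =>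
            Finset.sum_congr rfl fun k _ => trace_cyc4 _ _ _ _
      _ = _ := expandE1 A
  have eP4 : ∑ i : Fin n, ∑ j : Fin n, ∑ l : Fin n, (A i * A j * A j * A l).trace
      = ((∑ i : Fin n, A i) * (∑ i : Fin n, A i) * (∑ i : Fin n, A i * A i)).trace := by
    calc ∑ i : Fin n, ∑ j : Fin n, ∑ l : Fin n, (A i * A j * A j * A l).trace
        = ∑ i : Fin n, ∑ j : Fin n, ∑ l : Fin n, (A l * A i * A j * A j).trace :=
          Finset.sum_congr rfl fun i _ => Finset.sum_congr rfl fun j _ =>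
            Finset.sum_congr rfl fun l _ => trace_cyc4 _ _ _ _
      _ = ∑ l : Fin n, ∑ j : Fin n, ∑ i : Fin n, (A l * A i * A j * A j).trace :=
          sum_comm3 _
      _ = ∑ l : Fin n, ∑ i : Fin n, ∑ j : Fin n, (A l * A i * A j * A j).trace :=
          Finset.sum_congr rfl fun l _ => Finset.sum_comm
      _ = _ := expandE2 A
  have eP5 : ∑ i : Fin n, ∑ j : Fin n, ∑ k : Fin n, (A i * A j * A k * A j).trace
      = ∑ i : Fin n, (A i * (∑ m : Fin n, A m) * A i * (∑ m : Fin n, A m)).trace := by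
    calc ∑ i : Fin n, ∑ j : Fin n, ∑ k : Fin n, (A i * A j * A k * A j).trace
        = ∑ i : Fin n, ∑ j : Fin n, ∑ k : Fin n, (A j * A i * A j * A k).trace :=
          Finset.sum_congr rfl fun i _ => Finset.sum_congr rfl fun j _ =>
            Finset.sum_congr rfl fun k _ => trace_cyc4 _ _ _ _
      _ = ∑ j : Fin n, ∑ i : Fin n, ∑ k : Fin n, (A j * A i * A j * A k).trace :=
          Finset.sum_comm
      _ = _ := expandE3 A
  have eP6 : ∑ i : Fin n, ∑ j : Fin n, ∑ k : Fin n, (A i * A j * A k * A k).trace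
      = ((∑ i : Fin n, A i) * (∑ i : Fin n, A i) * (∑ i : Fin n, A i * A i)).trace :=
    expandE2 A
  have eD1 : ∑ i : Fin n, ∑ k : Fin n, (A i * A i * A k * A k).trace
      = ((∑ i : Fin n, A i * A i) * (∑ i : Fin n, A i * A i)).trace := expandE4 A
  have eD3 : ∑ i : Fin n, ∑ j : Fin n, (A i * A j * A j * A i).trace
      = ((∑ i : Fin n, A i * A i) * (∑ i : Fin n, A i * A i)).trace := by
    calc ∑ i : Fin n, ∑ j : Fin n, (A i * A j * A j * A i).trace
        = ∑ i : Fin n, ∑ j : Fin n, (A i * A i * A j * A j).trace :=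
          Finset.sum_congr rfl fun i _ => Finset.sum_congr rfl fun j _ =>
            trace_cyc4 _ _ _ _
      _ = _ := expandE4 A
  have eR1 : ∑ i : Fin n, ∑ l : Fin n, (A i * A i * A i * A l).trace
      = ∑ i : Fin n, (A i * A i * A i * (∑ m : Fin n, A m)).trace := expandE5 A
  have eR2 : ∑ i : Fin n, ∑ k : Fin n, (A i * A i * A k * A i).trace
      = ∑ i : Fin n, (A i * A i * A i * (∑ m : Fin n, A m)).trace := by
    calc ∑ i : Fin n, ∑ k : Fin n, (A i * A i * A k * A i).trace
        = ∑ i : Fin n, ∑ k : Fin n, (A i * A i * A i * A k).trace :=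
          Finset.sum_congr rfl fun i _ => Finset.sum_congr rfl fun k _ =>
            trace_cyc4 _ _ _ _
      _ = _ := expandE5 A
  have eR3 : ∑ i : Fin n, ∑ j : Fin n, (A i * A j * A i * A i).trace
      = ∑ i : Fin n, (A i * A i * A i * (∑ m : Fin n, A m)).trace := by
    calc ∑ i : Fin n, ∑ j : Fin n, (A i * A j * A i * A i).trace
        = ∑ i : Fin n, ∑ j : Fin n, (A i * A i * A i * A j).trace :=
          Finset.sum_congr rfl fun i _ => Finset.sum_congr rfl fun j _ =>
            (trace_cyc4 _ _ _ _).trans (trace_cyc4 _ _ _ _)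
      _ = _ := expandE5 A
  have eR4 : ∑ i : Fin n, ∑ j : Fin n, (A i * A j * A j * A j).trace
      = ∑ i : Fin n, (A i * A i * A i * (∑ m : Fin n, A m)).trace := by
    calc ∑ i : Fin n, ∑ j : Fin n, (A i * A j * A j * A j).trace
        = ∑ i : Fin n, ∑ j : Fin n, (A j * A j * A j * A i).trace :=
          Finset.sum_congr rfl fun i _ => Finset.sum_congr rfl fun j _ =>
            ((trace_cyc4 _ _ _ _).trans (trace_cyc4 _ _ _ _)).trans (trace_cyc4 _ _ _ _)
      _ = ∑ j : Fin n, ∑ i : Fin n, (A j * A j * A j * A i).trace := Finset.sum_comm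
      _ = _ := expandE5 A
  rw [key, eT0, eP1, eP2, eP3, eP4, eP5, eP6, eD1, eD3, eR1, eR2, eR3, eR4, hSSBeq]
  -- convert the right-hand side
  have e4 : (n : ℝ) ^ 4 * ((((n : ℝ)⁻¹ • ∑ i : Fin n, A i) ^ 4).trace)
      = ((∑ i : Fin n, A i) * (∑ i : Fin n, A i) * (∑ i : Fin n, A i)
        * (∑ i : Fin n, A i)).trace := by
    rw [smul_pow, Matrix.trace_smul, smul_eq_mul,
      show (∑ i : Fin n, A i) ^ 4 = (∑ i : Fin n, A i) * (∑ i : Fin n, A i)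
        * (∑ i : Fin n, A i) * (∑ i : Fin n, A i) by
        rw [pow_succ, pow_succ, pow_two]]
    field_simp
  have e2 : (n : ℝ) ^ 2 * ((((n : ℝ)⁻¹ • ∑ i : Fin n, A i) ^ 2).trace)
      = ((∑ i : Fin n, A i) * (∑ i : Fin n, A i)).trace := by
    rw [smul_pow, Matrix.trace_smul, smul_eq_mul,
      show (∑ i : Fin n, A i) ^ 2 = (∑ i : Fin n, A i) * (∑ i : Fin n, A i) from pow_two _]
    field_simp
  have eQ : ∑ i : Fin n, ((A i ^ 2).trace) = ∑ i : Fin n, (A i * A i).trace := by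
    simp only [pow_two]
  have hRHS : (n : ℝ) ^ 4 * ((((n : ℝ)⁻¹ • ∑ i : Fin n, A i) ^ 4).trace)
        + 10 * (n : ℝ) ^ 2 * ((((n : ℝ)⁻¹ • ∑ i : Fin n, A i) ^ 2).trace)
            * ∑ i : Fin n, ((A i ^ 2).trace)
        + 13 * (∑ i : Fin n, ((A i ^ 2).trace)) ^ 2
      = ((∑ i : Fin n, A i) * (∑ i : Fin n, A i) * (∑ i : Fin n, A i)
          * (∑ i : Fin n, A i)).trace
        + 10 * ((∑ i : Fin n, (A i * A i).trace)
          * ((∑ i : Fin n, A i) * (∑ i : Fin n, A i)).trace)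
        + 13 * ((∑ i : Fin n, (A i * A i).trace) * (∑ i : Fin n, (A i * A i).trace)) := by
    rw [eQ]
    linear_combination e4 + (10 * (∑ i : Fin n, (A i * A i).trace)) * e2
  rw [hRHS, abs_le]
  constructor
  · linarith [hBSSle, hBSSnn, hcross_le, hcross_nn, hBBle, hBBnn, hD2_le, hD2_nn,
      hU_le, hU_nn, hR_le, hR_nn, hT0nn]
  · linarith [hBSSle, hBSSnn, hcross_le, hcross_nn, hBBle, hBBnn, hD2_le, hD2_nn,
      hU_le, hU_nn, hR_le, hR_nn, hT0nn]
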